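/- With the same setup, the quantity ℒ_{q_T} := ln Z_T + Σ_{R∈ℛ\ℛ_T} Σ_x q_T(x) ln α_R(x_R) is a lower bound on the log partition function: ℒ_{q_T} ≤ ln Z. -/

import Mathlib

open Finset Real

/-- `ℒ_{q_T} = ln Z_T + Σ_{R∉T} Σ_x q_T(x) ln α_R(x)` is a lower bound
on the log partition function `ln Z`. -/
theorem subtree_lower_bound {X : Type*} [Fintype X] [Nonempty X]
    {R : Type*} [Fintype R] [DecidableEq R] (α : R → X → ℝ) (hα : ∀ r x, 0 < α r x)
    (T : Finset R) (Z ZT : ℝ) (qT : X → ℝ)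
    (hZ : Z = ∑ x, ∏ r, α r x)
    (hZT : ZT = ∑ x, ∏ r ∈ T, α r x)
    (hq : ∀ x, qT x = (∏ r ∈ T, α r x) / ZT) :
    Real.log ZT + ∑ r ∈ Tᶜ, ∑ x, qT x * Real.log (α r x) ≤ Real.log Z := by
  set w : X → ℝ := fun x => ∏ r ∈ Tᶜ, α r x with hw
  have hwpos : ∀ x, 0 < w x := fun x => Finset.prod_pos fun r _ => hα r x
  have hZTpos : 0 < ZT := by
    rw [hZT]
    exact Finset.sum_pos (fun x _ => Finset.prod_pos fun r _ => hα r x)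
      Finset.univ_nonempty
  have hqpos : ∀ x, 0 < qT x := fun x => by
    rw [hq x]; exact div_pos (Finset.prod_pos fun r _ => hα r x) hZTpos
  have hqsum : ∑ x, qT x = 1 := by
    simp only [hq, ← Finset.sum_div]
    rw [← hZT, div_self hZTpos.ne']
  -- rewrite the double sum
  have h1 : ∑ r ∈ Tᶜ, ∑ x, qT x * Real.log (α r x) = ∑ x, qT x * Real.log (w x) := by
    rw [Finset.sum_comm]
    refine Finset.sum_congr rfl fun x _ => ?_
    rw [← Finset.mul_sum, hw]
    congr 1
    rw [Real.log_prod fun r _ => (hα r x).ne']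
  rw [h1]
  -- Jensen
  have hjensen : ∑ x, qT x * Real.log (w x) ≤ Real.log (∑ x, qT x * w x) := by
    have hconc : ConcaveOn ℝ (Set.Ioi (0:ℝ)) Real.log :=
      strictConcaveOn_log_Ioi.concaveOn
    have := hconc.le_map_sum (t := Finset.univ) (w := qT) (p := w)
      (fun x _ => (hqpos x).le) hqsum (fun x _ => hwpos x)
    simpa [smul_eq_mul] using this
  have hsumpos : 0 < ∑ x, qT x * w x :=
    Finset.sum_pos (fun x _ => mul_pos (hqpos x) (hwpos x)) Finset.univ_nonempty
  calc Real.log ZT + ∑ x, qT x * Real.log (w x)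
      ≤ Real.log ZT + Real.log (∑ x, qT x * w x) := by linarith
    _ = Real.log (ZT * ∑ x, qT x * w x) :=
        (Real.log_mul hZTpos.ne' hsumpos.ne').symm
    _ = Real.log Z := by
        congr 1
        rw [Finset.mul_sum, hZ]
        refine Finset.sum_congr rfl fun x _ => ?_
        rw [hq x, hw]
        field_simp
        rw [Finset.prod_mul_prod_compl]
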